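/- Let f : ℝⁿ → ℝ be proper, convex and lower semicontinuous, and fix x ∈ ℝⁿ. Then the function h₃(τ) = ‖prox_{(1/τ)f}(x/τ)‖₂² is nonincreasing on τ ∈ (0, ∞). -/

import Mathlib

/-- τ ↦ ‖prox_{(1/τ)f}(x/τ)‖² is nonincreasing on (0, ∞). -/
theorem prox_inv_param_antitone {n : ℕ} (f : EuclideanSpace ℝ (Fin n) → ℝ)
    (hf_conv : ConvexOn ℝ Set.univ f) (hf_lsc : LowerSemicontinuous f)
    (P : ℝ → EuclideanSpace ℝ (Fin n) → EuclideanSpace ℝ (Fin n))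
    (hP : ∀ γ ∈ Set.Ioi (0 : ℝ), ∀ x,
      IsMinOn (fun z => f z + (1 / (2 * γ)) * ‖x - z‖ ^ 2) Set.univ (P γ x))
    (x : EuclideanSpace ℝ (Fin n)) :
    AntitoneOn (fun τ : ℝ => ‖P (1 / τ) (τ⁻¹ • x)‖ ^ 2) (Set.Ioi 0) := by
  intro σ hσ τ hτ hστ
  simp only [Set.mem_Ioi] at hσ hτ
  set u := P (1 / σ) (σ⁻¹ • x) with hu
  set v := P (1 / τ) (τ⁻¹ • x) with hv
  have h1 := (hP (1 / σ) (by simp [hσ]) (σ⁻¹ • x)) (Set.mem_univ v)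
  have h2 := (hP (1 / τ) (by simp [hτ]) (τ⁻¹ • x)) (Set.mem_univ u)
  simp only [← hu, ← hv] at h1 h2
  have e1 : (1 : ℝ) / (2 * (1 / σ)) = σ / 2 := by field_simp
  have e2 : (1 : ℝ) / (2 * (1 / τ)) = τ / 2 := by field_simp
  rw [e1] at h1
  rw [e2] at h2
  have nu : ∀ (t : ℝ) (w : EuclideanSpace ℝ (Fin n)),
      ‖t • x - w‖ ^ 2 = t ^ 2 * ‖x‖ ^ 2 - 2 * t * inner ℝ x w + ‖w‖ ^ 2 := by
    intro t w
    rw [@norm_sub_sq_real, norm_smul, real_inner_smul_left, mul_pow,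
      Real.norm_eq_abs, sq_abs]
    ring
  simp only [Set.mem_setOf_eq, nu] at h1 h2
  show ‖v‖ ^ 2 ≤ ‖u‖ ^ 2
  have r : ∀ t : ℝ, 0 < t → ∀ C p A : ℝ,
      t / 2 * (t⁻¹ ^ 2 * C - 2 * t⁻¹ * p + A) = C / (2 * t) - p + t * A / 2 := by
    intro t ht C p A
    field_simp
  rw [r σ hσ, r σ hσ] at h1
  rw [r τ hτ, r τ hτ] at h2
  rcases eq_or_lt_of_le hστ with heq | hlt
  · subst heq
    exact le_rfl
  · nlinarith [h1, h2, hlt]
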